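/- Let U be a compact convex subset of an n-dimensional real normed space, V a compact Hausdorff space, and J : U × V → ℝ a jointly continuous function such that for each fixed v ∈ V the map u ↦ J(u,v) is convex on U. Then an element u* ∈ U minimizes the function u ↦ max_{v∈V} J(u,v) over U if and only if there exist nonnegative real numbers λ₁,…,λ_{n+1} with λ₁+⋯+λ_{n+1} = 1 and points v₁*,…,v_{n+1}* ∈ V such that for all u ∈ U, all v₁,…,v_{n+1} ∈ V, and all nonnegative μ₁,…,μ_{n+1} with μ₁+⋯+μ_{n+1} = 1, one has Σ_{i=1}^{n+1} μᵢ J(u*, vᵢ) ≤ Σ_{i=1}^{n+1} λᵢ J(u*, vᵢ*) ≤ Σ_{i=1}^{n+1} λᵢ J(u, vᵢ*). -/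

import Mathlib

open Finset

lemma sep_minimax {E : Type*} [NormedAddCommGroup E] [NormedSpace ℝ E]
    {k : ℕ} [NeZero k] {U : Set E} (hne : U.Nonempty) (hconv : Convex ℝ U)
    (g : Fin k → E → ℝ) (hg : ∀ i, ConvexOn ℝ U (g i)) (c : ℝ)
    (h : ∀ u ∈ U, ∃ i, c ≤ g i u) :
    ∃ lam : Fin k → ℝ, (∀ i, 0 ≤ lam i) ∧ (∑ i, lam i) = 1 ∧
      ∀ u ∈ U, c ≤ ∑ i, lam i * g i u := by
  classical
  set B : Set (Fin k → ℝ) := Set.pi Set.univ (fun _ => Set.Iio c) with hB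
  set K : Set (Fin k → ℝ) := {y | ∃ u ∈ U, ∀ i, g i u ≤ y i} with hK
  have hBopen : IsOpen B := isOpen_set_pi Set.finite_univ (fun _ _ => isOpen_Iio)
  have hBconv : Convex ℝ B := convex_pi (fun _ _ => convex_Iio c)
  have hKconv : Convex ℝ K := by
    rintro y₁ ⟨u₁, hu₁, h₁⟩ y₂ ⟨u₂, hu₂, h₂⟩ a b ha hb hab
    refine ⟨a • u₁ + b • u₂, hconv hu₁ hu₂ ha hb hab, fun i => ?_⟩
    calc g i (a • u₁ + b • u₂) ≤ a * g i u₁ + b * g i u₂ := (hg i).2 hu₁ hu₂ ha hb hab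
    _ ≤ a * y₁ i + b * y₂ i := by
        gcongr
        · exact h₁ i
        · exact h₂ i
    _ = (a • y₁ + b • y₂) i := by simp [mul_comm]
  have hdisj : Disjoint B K := by
    rw [Set.disjoint_left]
    rintro y hyB ⟨u, hu, hgu⟩
    obtain ⟨i, hi⟩ := h u hu
    have : y i < c := hyB i (Set.mem_univ i)
    exact absurd ((hi.trans (hgu i))) (not_le.mpr this)
  obtain ⟨f, α, hfB, hfK⟩ := geometric_hahn_banach_open hBconv hBopen hKconv hdisj
  set lam : Fin k → ℝ := fun i => f (Pi.single i 1) with hlam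
  have hf_eq : ∀ y : Fin k → ℝ, f y = ∑ i, y i * lam i := by
    intro y
    have hy : y = ∑ i, (y i) • (Pi.single i (1:ℝ) : Fin k → ℝ) := by
      ext j
      simp [Finset.sum_apply, Pi.single_apply]
    conv_lhs => rw [hy]
    rw [map_sum]
    simp [smul_eq_mul]
    rfl
  -- a point of B
  have hyB : (fun _ => c - 1 : Fin k → ℝ) ∈ B := by
    intro i _
    simp
  obtain ⟨u₀, hu₀⟩ := hne
  have hyK : (fun i => g i u₀) ∈ K := ⟨u₀, hu₀, fun i => le_rfl⟩
  have hlam_nonneg : ∀ i, 0 ≤ lam i := by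
    intro i
    by_contra hneg
    push_neg at hneg
    set t : ℝ := (α - f (fun _ => c - 1) + 1) / (-lam i) with ht
    have hden : (0:ℝ) < -lam i := by linarith
    have hnum : (0:ℝ) < α - f (fun _ => c - 1) + 1 := by
      have := hfB _ hyB
      linarith
    have htpos : 0 < t := div_pos hnum hden
    have hmem : ((fun _ => c - 1 : Fin k → ℝ) - t • (Pi.single i (1:ℝ) : Fin k → ℝ)) ∈ B := by
      intro j _
      simp only [Pi.sub_apply, Pi.smul_apply, Pi.single_apply, smul_eq_mul, Set.mem_Iio]
      split <;> nlinarith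
    have hval := hfB _ hmem
    rw [map_sub, map_smul] at hval
    have : t * (-lam i) = α - f (fun _ => c - 1) + 1 := by
      rw [ht]; exact div_mul_cancel₀ _ hden.ne'
    simp only [smul_eq_mul] at hval
    nlinarith
  set s : ℝ := ∑ i, lam i with hs
  have hs_nonneg : 0 ≤ s := Finset.sum_nonneg fun i _ => hlam_nonneg i
  have hs_pos : 0 < s := by
    rcases hs_nonneg.lt_or_eq with h | h
    · exact h
    have hall : ∀ i ∈ Finset.univ, lam i = 0 :=
      (Finset.sum_eq_zero_iff_of_nonneg (fun i _ => hlam_nonneg i)).mp h.symm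
    have hf0 : ∀ y : Fin k → ℝ, f y = 0 := by
      intro y; rw [hf_eq]
      exact Finset.sum_eq_zero fun i _ => by rw [hall i (Finset.mem_univ i), mul_zero]
    have h1 := hfB _ hyB
    have h2 := hfK _ hyK
    rw [hf0] at h1 h2
    linarith
  have hcs : c * s ≤ α := by
    by_contra hlt
    push_neg at hlt
    set δ : ℝ := (c * s - α) / s with hδ
    have hδpos : 0 < δ := div_pos (by linarith) hs_pos
    have hmem : (fun _ => c - δ : Fin k → ℝ) ∈ B := fun j _ => by
      simp only [Set.mem_Iio]; linarith
    have hval := hfB _ hmem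
    rw [hf_eq] at hval
    have : ∑ i, (c - δ) * lam i = (c - δ) * s := by
      rw [hs, Finset.mul_sum]
    rw [this] at hval
    have : δ * s = c * s - α := by rw [hδ]; field_simp
    nlinarith
  refine ⟨fun i => lam i / s, fun i => div_nonneg (hlam_nonneg i) hs_nonneg, ?_, ?_⟩
  · rw [← Finset.sum_div, ← hs, div_self hs_pos.ne']
  · intro u hu
    have hyuK : (fun i => g i u) ∈ K := ⟨u, hu, fun i => le_rfl⟩
    have := hfK _ hyuK
    rw [hf_eq] at this
    have hsum : ∑ i, lam i / s * g i u = (∑ i, g i u * lam i) / s := by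
      rw [Finset.sum_div]
      congr 1; ext i; ring
    rw [hsum, le_div_iff₀ hs_pos]
    nlinarith
open Finset

lemma helly_eps {E : Type*} [NormedAddCommGroup E] [NormedSpace ℝ E]
    {n : ℕ} (hn : 0 < n) (hE : Module.finrank ℝ E = n)
    {V : Type*} [TopologicalSpace V] [CompactSpace V] [T2Space V] [Nonempty V]
    {U : Set E} (hUc : IsCompact U) (hUconv : Convex ℝ U)
    {J : E → V → ℝ} (hJcont : ContinuousOn (fun p : E × V => J p.1 p.2) (U ×ˢ Set.univ))
    (hJconv : ∀ v, ConvexOn ℝ U (fun u => J u v))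
    {u₀ : E} (h₀ : u₀ ∈ U) {c : ℝ} (hmin : ∀ u ∈ U, c ≤ ⨆ v, J u v)
    {ε : ℝ} (hε : 0 < ε) :
    ∃ (lam : Fin (n+1) → ℝ) (w : Fin (n+1) → V), (∀ i, 0 ≤ lam i) ∧ (∑ i, lam i) = 1 ∧
      ∀ u ∈ U, c - ε ≤ ∑ i, lam i * J u (w i) := by
  classical
  have hFD : FiniteDimensional ℝ E := FiniteDimensional.of_finrank_pos (hE ▸ hn)
  set F : V → Set E := fun v => {u ∈ U | J u v ≤ c - ε} with hF
  have hJv : ∀ v : V, ContinuousOn (fun u => J u v) U := by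
    intro v
    exact hJcont.comp (Continuous.continuousOn (continuous_id.prodMk continuous_const))
      (fun u hu => ⟨hu, trivial⟩)
  have hFconv : ∀ v, Convex ℝ (F v) := fun v => (hJconv v).convex_le (c - ε)
  have hFcomp : ∀ v, IsCompact (F v) := by
    intro v
    have hcl : IsClosed (U ∩ (fun u => J u v) ⁻¹' Set.Iic (c - ε)) :=
      (hJv v).preimage_isClosed_of_isClosed hUc.isClosed isClosed_Iic
    exact hUc.of_isClosed_subset hcl (Set.inter_subset_left)
  have hFempty : ¬ (⋂ v, F v).Nonempty := by
    rintro ⟨u, hu⟩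
    have hu' : u ∈ F (Classical.arbitrary V) := Set.mem_iInter.mp hu _
    have huU : u ∈ U := hu'.1
    have : (⨆ v, J u v) ≤ c - ε := ciSup_le fun v => (Set.mem_iInter.mp hu v).2
    have := hmin u huU
    linarith
  have hI : ∃ I : Finset V, #I ≤ Module.finrank ℝ E + 1 ∧ ¬ (⋂ v ∈ I, F v).Nonempty := by
    by_contra hcon
    push_neg at hcon
    exact hFempty (Convex.helly_theorem_compact' hFconv hFcomp hcon)
  obtain ⟨I, hIcard, hIempty⟩ := hI
  rw [hE] at hIcard
  set w : Fin (n+1) → V := fun i =>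
    if h : (i : ℕ) < I.toList.length then I.toList.get ⟨i, h⟩ else Classical.arbitrary V with hw
  have hwmem : ∀ v ∈ I, ∃ i : Fin (n+1), w i = v := by
    intro v hv
    have hv' : v ∈ I.toList := Finset.mem_toList.mpr hv
    obtain ⟨j, hj⟩ := List.mem_iff_get.mp hv'
    have hlen : I.toList.length ≤ n + 1 := by
      rwa [Finset.length_toList]
    refine ⟨⟨j, lt_of_lt_of_le j.2 hlen⟩, ?_⟩
    simp only [hw]
    rw [dif_pos]
    · congr
    · exact j.2
  have hkey : ∀ u ∈ U, ∃ i : Fin (n+1), c - ε ≤ J u (w i) := by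
    intro u hu
    by_contra hcon
    push_neg at hcon
    apply hIempty
    refine ⟨u, ?_⟩
    rw [Set.mem_iInter₂]
    intro v hv
    obtain ⟨i, rfl⟩ := hwmem v hv
    exact ⟨hu, (hcon i).le⟩
  obtain ⟨lam, h1, h2, h3⟩ := sep_minimax ⟨u₀, h₀⟩ hUconv (fun i u => J u (w i))
    (fun i => hJconv (w i)) (c - ε) hkey
  exact ⟨lam, w, h1, h2, h3⟩
/-- **Generalized minimax theorem.** Let `U` be a compact convex subset of an
`n`-dimensional real normed space, `V` a compact Hausdorff space, and
`J : U × V → ℝ` a jointly continuous function that is convex in the first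
variable on `U`. Then `u⋆ ∈ U` minimizes `u ↦ max_{v ∈ V} J (u, v)` over `U`
iff there are nonnegative `λ₁, …, λ_{n+1}` summing to one and
`v₁⋆, …, v_{n+1}⋆ ∈ V` such that
`∑ μᵢ J (u⋆, vᵢ) ≤ ∑ λᵢ J (u⋆, vᵢ⋆) ≤ ∑ λᵢ J (u, vᵢ⋆)`
for all `u ∈ U`, `vᵢ ∈ V`, and nonnegative `μᵢ` summing to one. -/
theorem generalized_minimax
    {E : Type*} [NormedAddCommGroup E] [NormedSpace ℝ E]
    {n : ℕ} (hn : 0 < n) (hE : Module.finrank ℝ E = n)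
    {V : Type*} [TopologicalSpace V] [CompactSpace V] [T2Space V] [Nonempty V]
    (U : Set E) (hUc : IsCompact U) (hUconv : Convex ℝ U)
    (J : E → V → ℝ)
    (hJcont : ContinuousOn (fun p : E × V => J p.1 p.2) (U ×ˢ Set.univ))
    (hJconv : ∀ v : V, ConvexOn ℝ U (fun u => J u v))
    (ustar : E) (hustar : ustar ∈ U) :
    (∀ u ∈ U, (⨆ v : V, J ustar v) ≤ ⨆ v : V, J u v) ↔
      ∃ (lam : Fin (n + 1) → ℝ) (vstar : Fin (n + 1) → V),
        (∀ i, 0 ≤ lam i) ∧ (∑ i, lam i) = 1 ∧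
        ∀ u ∈ U, ∀ v : Fin (n + 1) → V, ∀ mu : Fin (n + 1) → ℝ,
          (∀ i, 0 ≤ mu i) → (∑ i, mu i) = 1 →
            (∑ i, mu i * J ustar (v i)) ≤ (∑ i, lam i * J ustar (vstar i)) ∧
            (∑ i, lam i * J ustar (vstar i)) ≤ ∑ i, lam i * J u (vstar i) := by
  classical
  -- continuity of `J u` for `u ∈ U`
  have hJu : ∀ u ∈ U, Continuous fun v => J u v := by
    intro u hu
    rw [← continuousOn_univ]
    exact hJcont.comp (Continuous.continuousOn (continuous_const.prodMk continuous_id))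
      (fun v _ => ⟨hu, trivial⟩)
  have hbdd : ∀ u ∈ U, BddAbove (Set.range fun v => J u v) := fun u hu =>
    (isCompact_range (hJu u hu)).bddAbove
  set c : ℝ := ⨆ v, J ustar v with hc
  have hub : ∀ v : V, J ustar v ≤ c := fun v => le_ciSup (hbdd ustar hustar) v
  constructor
  · -- forward direction
    intro hmin
    set φ : E → (Fin (n+1) → ℝ) × (Fin (n+1) → V) → ℝ :=
      fun u p => ∑ i, p.1 i * J u (p.2 i) with hφ
    have hφcont : ∀ u ∈ U, Continuous (φ u) := by
      intro u hu
      apply continuous_finset_sum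
      intro i _
      exact ((continuous_apply i).comp continuous_fst).mul
        ((hJu u hu).comp ((continuous_apply i).comp continuous_snd))
    set C : ℕ → Set ((Fin (n+1) → ℝ) × (Fin (n+1) → V)) := fun m =>
      (stdSimplex ℝ (Fin (n+1)) ×ˢ (Set.univ : Set (Fin (n+1) → V))) ∩
        {p | ∀ u ∈ U, c - 1/((m:ℝ)+1) ≤ φ u p} with hC
    have hCclosed : ∀ m, IsClosed (C m) := by
      intro m
      apply IsClosed.inter (IsClosed.prod (isClosed_stdSimplex (𝕜 := ℝ) (ι := Fin (n+1))) isClosed_univ)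
      have : {p : (Fin (n+1) → ℝ) × (Fin (n+1) → V) | ∀ u ∈ U, c - 1/((m:ℝ)+1) ≤ φ u p} =
          ⋂ u ∈ U, {p | c - 1/((m:ℝ)+1) ≤ φ u p} := by
        ext p; simp [Set.mem_iInter]
      rw [this]
      exact isClosed_biInter fun u hu => isClosed_le continuous_const (hφcont u hu)
    have hCcomp : IsCompact (C 0) :=
      ((IsCompact.prod (isCompact_stdSimplex (𝕜 := ℝ) (ι := Fin (n+1))) isCompact_univ)).of_isClosed_subset (hCclosed 0)
        Set.inter_subset_left
    have hCdec : ∀ m, C (m+1) ⊆ C m := by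
      intro m p hp
      refine ⟨hp.1, fun u hu => le_trans ?_ (hp.2 u hu)⟩
      have h1 : (1:ℝ)/((m:ℝ)+1+1) ≤ 1/((m:ℝ)+1) := by
        apply one_div_le_one_div_of_le <;> [linarith [Nat.cast_nonneg (α := ℝ) m]; linarith]
      push_cast
      linarith
    have hCne : ∀ m, (C m).Nonempty := by
      intro m
      have hεpos : (0:ℝ) < 1/((m:ℝ)+1) := by positivity
      obtain ⟨lam, w, h1, h2, h3⟩ := helly_eps hn hE hUc hUconv hJcont hJconv hustar hmin hεpos
      exact ⟨(lam, w), ⟨⟨h1, h2⟩, trivial⟩, fun u hu => h3 u hu⟩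
    obtain ⟨p, hp⟩ := IsCompact.nonempty_iInter_of_sequence_nonempty_isCompact_isClosed
      C hCdec hCne hCcomp hCclosed
    have hpmem := Set.mem_iInter.mp hp
    obtain ⟨⟨hlam_pos, hlam_sum⟩, -⟩ := (hpmem 0).1
    have hlow : ∀ u ∈ U, c ≤ φ u p := by
      intro u hu
      by_contra hcon
      push_neg at hcon
      obtain ⟨m, hm⟩ := exists_nat_one_div_lt (sub_pos.mpr hcon)
      have := (hpmem m).2 u hu
      linarith
    refine ⟨p.1, p.2, hlam_pos, hlam_sum, ?_⟩
    intro u hu v mu hmu hmusum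
    have hS_le_c : φ ustar p ≤ c := by
      calc φ ustar p ≤ ∑ i, p.1 i * c :=
        Finset.sum_le_sum fun i _ => mul_le_mul_of_nonneg_left (hub _) (hlam_pos i)
      _ = c := by rw [← Finset.sum_mul, hlam_sum, one_mul]
    have hc_le_S : c ≤ φ ustar p := hlow ustar hustar
    constructor
    · calc ∑ i, mu i * J ustar (v i) ≤ ∑ i, mu i * c :=
        Finset.sum_le_sum fun i _ => mul_le_mul_of_nonneg_left (hub _) (hmu i)
      _ = c := by rw [← Finset.sum_mul, hmusum, one_mul]
      _ ≤ φ ustar p := hc_le_S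
    · exact le_trans hS_le_c (hlow u hu)
  · -- backward direction
    rintro ⟨lam, vstar, hpos, hsum, H⟩ u hu
    apply ciSup_le
    intro v₀
    have hmu : ∀ i : Fin (n+1), (0:ℝ) ≤ if i = 0 then 1 else 0 := by
      intro i; split <;> norm_num
    have hmusum : (∑ i : Fin (n+1), if i = 0 then (1:ℝ) else 0) = 1 := by
      simp
    obtain ⟨h1, h2⟩ := H u hu (fun _ => v₀) (fun i => if i = 0 then 1 else 0) hmu hmusum
    have he : ∑ i : Fin (n+1), (if i = 0 then (1:ℝ) else 0) * J ustar v₀ = J ustar v₀ := by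
      rw [← Finset.sum_mul, hmusum, one_mul]
    rw [he] at h1
    calc J ustar v₀ ≤ ∑ i, lam i * J u (vstar i) := le_trans h1 h2
    _ ≤ ∑ i, lam i * ⨆ v, J u v :=
        Finset.sum_le_sum fun i _ => mul_le_mul_of_nonneg_left (le_ciSup (hbdd u hu) _) (hpos i)
    _ = ⨆ v, J u v := by rw [← Finset.sum_mul, hsum, one_mul]
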